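/- Let p ≥ (ln n)/n and set f(n) = np/ln n. With probability tending to 1 as n → ∞, G ~ G(n,p) satisfies: every subset U ⊆ V with |U| ≤ n·(ln ln n)/(ln n) spans at most 100·|U|·f(n)·ln ln n edges. -/

import Mathlib

set_option maxHeartbeats 1000000

open MeasureTheory Filter

/-- The Erdős–Rényi random graph measure `G(n,p)`: each potential edge (an element of
`Sym2 (Fin n)`) is present independently with probability `p`. -/
noncomputable def gnp (n : ℕ) (p : ENNReal) (hp : p ≤ 1) :
    Measure (Sym2 (Fin n) → Bool) :=
  Measure.pi fun _ => (PMF.bernoulli p.toNNReal (by simpa using ENNReal.toNNReal_mono ENNReal.one_ne_top hp)).toMeasure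

/-- The graph determined by an outcome `ω` of the edge indicators. -/
def graphOf {n : ℕ} (ω : Sym2 (Fin n) → Bool) : SimpleGraph (Fin n) :=
  SimpleGraph.fromEdgeSet {e | ω e = true}


/-- The number of edges of `G` spanned by the vertex set `U`. -/
noncomputable def edgesIn {V : Type*} (G : SimpleGraph V) (U : Set V) : ℕ :=
  {e ∈ G.edgeSet | ∀ x ∈ e, x ∈ U}.ncard

/-- slots within U -/
def slots {n : ℕ} (F : Finset (Fin n)) : Finset (Sym2 (Fin n)) :=
  Finset.univ.filter (fun e => ¬ e.IsDiag ∧ ∀ x ∈ e, x ∈ F)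

lemma pow_le_factorial_mul_exp (k : ℕ) : (k:ℝ)^k ≤ k.factorial * Real.exp k := by
  have h1 : (k:ℝ)^k / k.factorial ≤ Real.exp k := by
    calc (k:ℝ)^k / k.factorial
        ≤ ∑ i ∈ Finset.range (k+1), (k:ℝ)^i / i.factorial := by
          refine Finset.single_le_sum (f := fun i => (k:ℝ)^i / i.factorial) ?_
            (Finset.self_mem_range_succ k)
          intro i _; positivity
      _ ≤ Real.exp k := Real.sum_le_exp_of_nonneg (by positivity) _
  have h2 : (0:ℝ) < k.factorial := by positivity
  calc (k:ℝ)^k = (k:ℝ)^k / k.factorial * k.factorial := by field_simp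
    _ ≤ Real.exp k * k.factorial := by
        exact mul_le_mul_of_nonneg_right h1 h2.le
    _ = k.factorial * Real.exp k := by ring

lemma choose_mul_pow_le {m k : ℕ} (hk : 1 ≤ k) {x : ℝ} (hx : 0 ≤ x) :
    (m.choose k : ℝ) * x^k ≤ (Real.exp 1 * m * x / k)^k := by
  have hkpos : (0:ℝ) < k := by exact_mod_cast hk
  have h1 : (m.choose k : ℝ) ≤ (m:ℝ)^k / k.factorial := by
    exact_mod_cast Nat.choose_le_pow_div k m
  have h2 : (1:ℝ) / k.factorial ≤ Real.exp k / (k:ℝ)^k := by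
    rw [div_le_div_iff₀ (by positivity) (by positivity)]
    have := pow_le_factorial_mul_exp k
    nlinarith
  have h3 : (m.choose k : ℝ) * x^k ≤ (m:ℝ)^k * x^k * Real.exp k / (k:ℝ)^k := by
    have hx' : (0:ℝ) ≤ x ^ k := by positivity
    calc (m.choose k : ℝ) * x^k ≤ (m:ℝ)^k / k.factorial * x^k :=
          mul_le_mul_of_nonneg_right h1 hx'
      _ = (m:ℝ)^k * x^k * ((1:ℝ)/k.factorial) := by ring
      _ ≤ (m:ℝ)^k * x^k * (Real.exp k / (k:ℝ)^k) := by
          refine mul_le_mul_of_nonneg_left h2 (by positivity)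
      _ = (m:ℝ)^k * x^k * Real.exp k / (k:ℝ)^k := by ring
  calc (m.choose k : ℝ) * x^k ≤ (m:ℝ)^k * x^k * Real.exp k / (k:ℝ)^k := h3
    _ = (Real.exp 1 * m * x / k)^k := by
        rw [div_pow, mul_pow, mul_pow, ← Real.exp_one_pow]
        ring

lemma gnp_meas {n : ℕ} (s : Set (Sym2 (Fin n) → Bool)) : MeasurableSet s :=
  s.to_countable.measurableSet

instance gnp_prob (n : ℕ) (p : ENNReal) (hp : p ≤ 1) :
    IsProbabilityMeasure (gnp n p hp) := by
  unfold gnp; infer_instance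

lemma gnp_cyl (n : ℕ) (p : ENNReal) (hp : p ≤ 1) (T : Finset (Sym2 (Fin n))) :
    gnp n p hp {ω | ∀ e ∈ T, ω e = true} = p ^ T.card := by
  have hset : {ω : Sym2 (Fin n) → Bool | ∀ e ∈ T, ω e = true}
      = Set.pi Set.univ (fun e => if e ∈ T then {true} else Set.univ) := by
    ext ω
    simp only [Set.mem_pi, Set.mem_setOf_eq, Set.mem_univ, true_implies]
    constructor
    · intro h e
      by_cases he : e ∈ T
      · simp [he, h e he]
      · simp [he]
    · intro h e he
      have := h e
      rw [if_pos he] at this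
      simpa using this
  rw [gnp, hset, Measure.pi_pi]
  have hone : ∀ e : Sym2 (Fin n),
      (PMF.bernoulli p.toNNReal (by simpa using ENNReal.toNNReal_mono ENNReal.one_ne_top hp)).toMeasure (if e ∈ T then ({true} : Set Bool) else Set.univ)
        = if e ∈ T then p else 1 := by
    intro e
    by_cases he : e ∈ T
    · simp only [he, if_true]
      rw [PMF.toMeasure_apply_singleton _ _ (measurableSet_singleton _)]
      show ((p.toNNReal : NNReal) : ENNReal) = p
      simp [ENNReal.coe_toNNReal (ne_top_of_le_ne_top ENNReal.one_ne_top hp)]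
    · simp only [he, if_false]
      rw [show (Set.univ : Set Bool) = {true} ∪ {false} by ext b; cases b <;> simp]
      rw [measure_union (by simp) (measurableSet_singleton _)]
      rw [PMF.toMeasure_apply_singleton _ _ (measurableSet_singleton _),
        PMF.toMeasure_apply_singleton _ _ (measurableSet_singleton _)]
      show ((p.toNNReal : NNReal) : ENNReal) + ((1 - p.toNNReal : NNReal) : ENNReal) = 1
      rw [ENNReal.coe_sub, ENNReal.coe_one,
        ENNReal.coe_toNNReal (ne_top_of_le_ne_top ENNReal.one_ne_top hp)]
      rw [add_tsub_cancel_of_le hp]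
  simp_rw [hone]
  rw [Finset.prod_ite_mem]
  simp [Finset.univ_inter, Finset.prod_const]

/-- slots within U -/
lemma card_slots_le {n : ℕ} (F : Finset (Fin n)) : (slots F).card ≤ F.card ^ 2 := by
  have hsub : slots F ⊆ (F ×ˢ F).image (fun p : Fin n × Fin n => s(p.1, p.2)) := by
    intro e he
    simp only [slots, Finset.mem_filter] at he
    obtain ⟨-, -, hmem⟩ := he
    induction e with
    | _ x y =>
      refine Finset.mem_image.2 ⟨(x, y), ?_, rfl⟩
      refine Finset.mem_product.2 ⟨hmem x (by simp), hmem y (by simp)⟩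
  calc (slots F).card ≤ ((F ×ˢ F).image (fun p : Fin n × Fin n => s(p.1, p.2))).card :=
        Finset.card_le_card hsub
    _ ≤ (F ×ˢ F).card := Finset.card_image_le
    _ = F.card ^ 2 := by rw [Finset.card_product, sq]

lemma measure_B_le (n : ℕ) (p : ENNReal) (hp : p ≤ 1) (F : Finset (Fin n)) (k : ℕ) :
    gnp n p hp {ω | k ≤ edgesIn (graphOf ω) ↑F}
      ≤ ((F.card ^ 2).choose k : ENNReal) * p ^ k := by
  have hsub : {ω : Sym2 (Fin n) → Bool | k ≤ edgesIn (graphOf ω) ↑F}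
      ⊆ ⋃ T ∈ (slots F).powersetCard k, {ω | ∀ e ∈ T, ω e = true} := by
    intro ω hω
    simp only [Set.mem_setOf_eq] at hω
    obtain ⟨t, ht, hcard⟩ := Set.exists_subset_card_eq hω
    have htfin : t.Finite := Set.toFinite t
    refine Set.mem_iUnion₂.2 ⟨htfin.toFinset, ?_, ?_⟩
    · rw [Finset.mem_powersetCard]
      constructor
      · intro e he
        rw [Set.Finite.mem_toFinset] at he
        have := ht he
        simp only [Set.mem_setOf_eq, graphOf, SimpleGraph.edgeSet_fromEdgeSet,
          Set.mem_diff, Set.mem_setOf_eq] at this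
        simp only [slots, Finset.mem_filter, Finset.mem_univ, true_and]
        exact ⟨this.1.2, fun x hx => this.2 x hx⟩
      · rw [← hcard, Set.ncard_eq_toFinset_card _ htfin]
    · intro e he
      rw [Set.Finite.mem_toFinset] at he
      have := ht he
      simp only [Set.mem_setOf_eq, graphOf, SimpleGraph.edgeSet_fromEdgeSet,
        Set.mem_diff, Set.mem_setOf_eq] at this
      exact this.1.1
  calc gnp n p hp {ω | k ≤ edgesIn (graphOf ω) ↑F}
      ≤ gnp n p hp (⋃ T ∈ (slots F).powersetCard k, {ω | ∀ e ∈ T, ω e = true}) :=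
        measure_mono hsub
    _ ≤ ∑ T ∈ (slots F).powersetCard k, gnp n p hp {ω | ∀ e ∈ T, ω e = true} :=
        measure_biUnion_finset_le _ _
    _ = ∑ T ∈ (slots F).powersetCard k, p ^ T.card := by
        refine Finset.sum_congr rfl fun T _ => gnp_cyl n p hp T
    _ = ∑ T ∈ (slots F).powersetCard k, p ^ k := by
        refine Finset.sum_congr rfl fun T hT => ?_
        rw [(Finset.mem_powersetCard.1 hT).2]
    _ = ((slots F).card.choose k : ENNReal) * p ^ k := by
        rw [Finset.sum_const, Finset.card_powersetCard, nsmul_eq_mul]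
    _ ≤ ((F.card ^ 2).choose k : ENNReal) * p ^ k := by
        refine mul_le_mul_left ?_ _
        exact_mod_cast Nat.choose_le_choose k (card_slots_le F)

lemma master (n j k m : ℕ) (q : ℝ)
    (hΛ : 1 ≤ Real.log (Real.log n))
    (hj : 1 ≤ j) (hjs : (j:ℝ) ≤ n * Real.log (Real.log n) / Real.log n)
    (hq0 : Real.log n / n ≤ q) (hq1 : q ≤ 1)
    (hm : m ≤ j^2)
    (hk100 : 100 * (j:ℝ) * ((n:ℝ) * q / Real.log n) * Real.log (Real.log n) ≤ k) :
    (n.choose j : ℝ) * ((m.choose k : ℝ) * q ^ k)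
      ≤ Real.exp (-(200 * j * Real.log (Real.log n))) := by
  set L : ℝ := Real.log n with hLdef
  set Λ : ℝ := Real.log L with hΛdef
  -- basic facts
  have hL0 : 0 ≤ L := Real.log_natCast_nonneg n
  have hL1 : 1 < L := by
    by_contra h
    push_neg at h
    have : Λ ≤ 0 := Real.log_nonpos hL0 h
    linarith
  have hn1 : 1 < (n:ℝ) := by
    by_contra h
    push_neg at h
    have : L ≤ 0 := by
      rcases Nat.eq_zero_or_pos n with h0 | h0
      · simp [hLdef, h0]
      · have : (1:ℝ) ≤ n := by exact_mod_cast h0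
        have : (n:ℝ) = 1 := le_antisymm h this
        simp [hLdef, this]
    linarith
  have hn0 : (0:ℝ) < n := by linarith
  have hq : 0 < q := lt_of_lt_of_le (by positivity) hq0
  have hΛ0 : (0:ℝ) < Λ := by linarith
  have hj0 : (0:ℝ) < j := by exact_mod_cast hj
  have hf : 1 ≤ (n:ℝ) * q / L := by
    rw [le_div_iff₀ (by linarith)]
    calc (1:ℝ) * L = L := one_mul L
      _ = (L / n) * n := by field_simp
      _ ≤ q * n := by
          exact mul_le_mul_of_nonneg_right hq0 hn0.le
      _ = n * q := by ring
  have hkj : 100 * (j:ℝ) * Λ ≤ k := by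
    refine le_trans ?_ hk100
    calc 100 * (j:ℝ) * Λ = (100 * (j:ℝ) * Λ) * 1 := by ring
      _ ≤ (100 * (j:ℝ) * Λ) * ((n:ℝ) * q / L) := by
          refine mul_le_mul_of_nonneg_left hf (by positivity)
      _ = 100 * (j:ℝ) * ((n:ℝ) * q / L) * Λ := by ring
  have hk1 : 1 ≤ k := by
    by_contra h
    push_neg at h
    interval_cases k
    simp only [Nat.cast_zero] at hkj
    nlinarith
  have hk0 : (0:ℝ) < k := by exact_mod_cast hk1
  -- t
  have hjL : (j:ℝ) * L ≤ (n:ℝ) * Λ := by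
    rw [div_eq_mul_inv] at hjs
    calc (j:ℝ) * L ≤ ((n:ℝ) * Λ * L⁻¹) * L := by
          exact mul_le_mul_of_nonneg_right hjs hL0
      _ = (n:ℝ) * Λ := by field_simp
  have hjL0 : (0:ℝ) < (j:ℝ) * L := by positivity
  set t : ℝ := Real.log ((n * Λ) / (j * L)) with htdef
  have harg1 : (1:ℝ) ≤ (n * Λ) / ((j:ℝ) * L) := (one_le_div hjL0).2 hjL
  have ht0 : 0 ≤ t := Real.log_nonneg harg1
  have hexpt : Real.exp t = (n * Λ) / ((j:ℝ) * L) := Real.exp_log (by positivity)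
  have hexpL : Real.exp Λ = L := Real.exp_log (by linarith)
  -- Step A
  have hA : (n.choose j : ℝ) ≤ Real.exp ((j:ℝ) * (1 + t + Λ)) := by
    have h1 : (n.choose j : ℝ) * (1:ℝ)^j ≤ (Real.exp 1 * n * 1 / j)^j :=
      choose_mul_pow_le hj (by norm_num)
    rw [one_pow, mul_one] at h1
    have hbase : Real.exp 1 * n * 1 / j ≤ Real.exp (1 + t + Λ) := by
      rw [mul_one]
      have h2 : Real.exp (t + Λ) = (n * Λ) / ((j:ℝ) * L) * L := by
        rw [Real.exp_add, hexpt, hexpL]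
      have h3 : (n:ℝ) / j ≤ Real.exp (t + Λ) := by
        rw [h2]
        have : (n * Λ) / ((j:ℝ) * L) * L = (n:ℝ) * Λ / j := by field_simp
        rw [this]
        rw [div_le_div_iff₀ hj0 hj0]
        nlinarith [mul_nonneg (mul_nonneg hn0.le hj0.le) (by linarith : (0:ℝ) ≤ Λ - 1)]
      calc Real.exp 1 * n / j = Real.exp 1 * ((n:ℝ)/j) := by ring
        _ ≤ Real.exp 1 * Real.exp (t + Λ) := by
            exact mul_le_mul_of_nonneg_left h3 (Real.exp_nonneg 1)
        _ = Real.exp (1 + t + Λ) := by rw [← Real.exp_add]; ring_nf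
    calc (n.choose j : ℝ) ≤ (Real.exp 1 * n * 1 / j)^j := h1
      _ ≤ (Real.exp (1 + t + Λ))^j := by
          refine pow_le_pow_left₀ ?_ hbase j
          positivity
      _ = Real.exp ((j:ℝ) * (1 + t + Λ)) := by rw [← Real.exp_nat_mul]
  -- Step B
  have hB : (m.choose k : ℝ) * q ^ k ≤ Real.exp (-(100 * (j:ℝ) * Λ * (3 + t))) := by
    have h1 : (m.choose k : ℝ) * q^k ≤ (Real.exp 1 * m * q / k)^k :=
      choose_mul_pow_le hk1 hq.le
    have hX : (0:ℝ) < 100 * (j:ℝ) * ((n:ℝ) * q / L) * Λ := by positivity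
    have hbase : Real.exp 1 * m * q / k ≤ Real.exp (-(3 + t)) := by
      have h2 : Real.exp 1 * m * q / k ≤ Real.exp 1 * (j:ℝ)^2 * q / k := by
        have hmj : (m:ℝ) ≤ (j:ℝ)^2 := by exact_mod_cast hm
        gcongr
      have h3 : Real.exp 1 * (j:ℝ)^2 * q / k
          ≤ Real.exp 1 * (j:ℝ)^2 * q / (100 * (j:ℝ) * ((n:ℝ) * q / L) * Λ) := by
        gcongr
        all_goals first | exact hX | exact hk100 | positivity
      have h4 : Real.exp 1 * (j:ℝ)^2 * q / (100 * (j:ℝ) * ((n:ℝ) * q / L) * Λ)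
          = (Real.exp 1 / 100) * (((j:ℝ) * L) / ((n:ℝ) * Λ)) := by
        field_simp
      have h5 : ((j:ℝ) * L) / ((n:ℝ) * Λ) = Real.exp (-t) := by
        rw [Real.exp_neg, hexpt]
        rw [inv_div]
      have he4 : Real.exp 1 ^ 4 ≤ 100 := by
        have h272 : Real.exp 1 ≤ 2.72 := by linarith [Real.exp_one_lt_d9]
        calc Real.exp 1 ^ 4 ≤ (2.72:ℝ) ^ 4 :=
              pow_le_pow_left₀ (Real.exp_nonneg 1) h272 4
          _ ≤ 100 := by norm_num
      have hexp4 : Real.exp 4 ≤ 100 := by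
        have h40 : Real.exp 4 = Real.exp 1 ^ 4 := by
          rw [← Real.exp_nat_mul]; norm_num
        linarith [h40 ▸ he4]
      have h6 : Real.exp 1 / 100 ≤ Real.exp (-3) := by
        rw [div_le_iff₀ (by norm_num : (0:ℝ) < 100)]
        calc Real.exp 1 = Real.exp 4 * Real.exp (-3) := by
              rw [← Real.exp_add]; norm_num
          _ ≤ 100 * Real.exp (-3) :=
              mul_le_mul_of_nonneg_right hexp4 (Real.exp_nonneg _)
          _ = Real.exp (-3) * 100 := by ring
      calc Real.exp 1 * m * q / k
            ≤ Real.exp 1 * (j:ℝ)^2 * q / (100 * (j:ℝ) * ((n:ℝ) * q / L) * Λ) := h2.trans h3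
        _ = (Real.exp 1 / 100) * (((j:ℝ) * L) / ((n:ℝ) * Λ)) := h4
        _ = (Real.exp 1 / 100) * Real.exp (-t) := by rw [h5]
        _ ≤ Real.exp (-3) * Real.exp (-t) :=
            mul_le_mul_of_nonneg_right h6 (Real.exp_nonneg _)
        _ = Real.exp (-(3 + t)) := by rw [← Real.exp_add]; ring_nf
    calc (m.choose k : ℝ) * q^k ≤ (Real.exp 1 * m * q / k)^k := h1
      _ ≤ (Real.exp (-(3+t)))^k := by
          refine pow_le_pow_left₀ ?_ hbase k
          positivity
      _ = Real.exp ((k:ℝ) * (-(3+t))) := by rw [← Real.exp_nat_mul]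
      _ ≤ Real.exp (-(100 * (j:ℝ) * Λ * (3 + t))) := by
          refine Real.exp_le_exp.2 ?_
          nlinarith [mul_nonneg (by linarith : (0:ℝ) ≤ (k:ℝ) - 100*(j:ℝ)*Λ) (by linarith : (0:ℝ) ≤ 3 + t)]
  -- combine
  calc (n.choose j : ℝ) * ((m.choose k : ℝ) * q ^ k)
      ≤ Real.exp ((j:ℝ) * (1 + t + Λ)) * Real.exp (-(100 * (j:ℝ) * Λ * (3 + t))) := by
        refine mul_le_mul hA hB (by positivity) (Real.exp_nonneg _)
    _ = Real.exp ((j:ℝ) * (1 + t + Λ) - 100 * (j:ℝ) * Λ * (3 + t)) := by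
        rw [← Real.exp_add]; ring_nf
    _ ≤ Real.exp (-(200 * j * Λ)) := by
        refine Real.exp_le_exp.2 ?_
        have key : (0:ℝ) ≤ 99*Λ - 1 + (100*Λ - 1)*t := by
          nlinarith [mul_nonneg (by linarith : (0:ℝ) ≤ 100*Λ-1) ht0]
        nlinarith [mul_nonneg hj0.le key]

lemma bad_bound (n : ℕ) (p : ENNReal) (hp : p ≤ 1)
    (hlb : ENNReal.ofReal (Real.log n / n) ≤ p)
    (hΛ : 1 ≤ Real.log (Real.log n)) :
    gnp n p hp {ω | ∀ U : Set (Fin n),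
          (U.ncard : ℝ) ≤ n * Real.log (Real.log n) / Real.log n →
          (edgesIn (graphOf ω) U : ℝ) ≤
            100 * U.ncard * (n * p.toReal / Real.log n) * Real.log (Real.log n)}ᶜ
      ≤ 2 * ENNReal.ofReal (Real.exp (-(200 * Real.log (Real.log n)))) := by
  set q : ℝ := p.toReal with hqdef
  set L : ℝ := Real.log n with hLdef
  set Λ : ℝ := Real.log L with hΛdef
  have hptop : p ≠ ⊤ := ne_top_of_le_ne_top ENNReal.one_ne_top hp
  have hq1 : q ≤ 1 := by
    have := ENNReal.toReal_mono ENNReal.one_ne_top hp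
    simpa using this
  have hL0 : 0 ≤ L := Real.log_natCast_nonneg n
  have hL1 : 1 < L := by
    by_contra h
    push_neg at h
    have : Λ ≤ 0 := Real.log_nonpos hL0 h
    linarith
  have hn0 : (0:ℝ) < n := by
    by_contra h
    push_neg at h
    have : n = 0 := by exact_mod_cast le_antisymm h (by positivity)
    rw [this] at hLdef
    simp at hLdef
    linarith
  have hq0 : L / n ≤ q := by
    have h1 := ENNReal.toReal_mono hptop hlb
    rwa [ENNReal.toReal_ofReal (by positivity)] at h1
  have hq : 0 < q := lt_of_lt_of_le (by positivity) hq0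
  have hpq : ENNReal.ofReal q = p := ENNReal.ofReal_toReal hptop
  have hΛ0 : (0:ℝ) < Λ := by linarith
  -- definitions
  set kf : ℕ → ℕ := fun u => ⌊100 * (u:ℝ) * ((n:ℝ) * q / L) * Λ⌋₊ + 1 with hkfdef
  have hkfreal : ∀ u : ℕ, 100 * (u:ℝ) * ((n:ℝ) * q / L) * Λ ≤ kf u := by
    intro u
    have := (Nat.lt_floor_add_one (100 * (u:ℝ) * ((n:ℝ) * q / L) * Λ)).le
    simpa [hkfdef] using this
  set B : Finset (Fin n) → Set (Sym2 (Fin n) → Bool) :=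
    fun F => {ω | kf F.card ≤ edgesIn (graphOf ω) ↑F} with hBdef
  classical
  set 𝒜 : Finset (Finset (Fin n)) :=
    Finset.univ.filter (fun F : Finset (Fin n) => (F.card:ℝ) ≤ n * Λ / L) with h𝒜def
  -- step 1 : the bad event is covered
  have hcover : {ω : Sym2 (Fin n) → Bool | ∀ U : Set (Fin n),
          (U.ncard : ℝ) ≤ n * Λ / L →
          (edgesIn (graphOf ω) U : ℝ) ≤ 100 * U.ncard * (n * q / L) * Λ}ᶜ
      ⊆ ⋃ F ∈ 𝒜, B F := by
    intro ω hω
    simp only [Set.mem_compl_iff, Set.mem_setOf_eq, not_forall] at hω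
    obtain ⟨U, hU1, hU2⟩ := hω
    push_neg at hU2
    have hUfin : U.Finite := Set.toFinite U
    set F : Finset (Fin n) := hUfin.toFinset with hFdef
    have hFcard : (F.card : ℕ) = U.ncard := (Set.ncard_eq_toFinset_card U hUfin).symm
    have hFcoe : (↑F : Set (Fin n)) = U := hUfin.coe_toFinset
    refine Set.mem_iUnion₂.2 ⟨F, ?_, ?_⟩
    · simp only [h𝒜def, Finset.mem_filter, Finset.mem_univ, true_and]
      rw [hFcard]
      exact hU1
    · simp only [hBdef, Set.mem_setOf_eq, hFcoe]
      have hx0 : (0:ℝ) ≤ 100 * (F.card:ℝ) * ((n:ℝ) * q / L) * Λ := by positivity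
      have hlt : 100 * (F.card:ℝ) * ((n:ℝ) * q / L) * Λ < edgesIn (graphOf ω) U := by
        rw [hFcard]
        exact hU2
      have h2 := (Nat.floor_lt hx0).2 hlt
      simp only [hkfdef]
      exact Nat.succ_le_of_lt h2
  -- step 2 : measure of the union
  have hstep2 : gnp n p hp (⋃ F ∈ 𝒜, B F)
      ≤ ∑ F ∈ 𝒜, ENNReal.ofReal (((F.card^2).choose (kf F.card) : ℝ) * q ^ (kf F.card)) := by
    refine le_trans (measure_biUnion_finset_le 𝒜 B) ?_
    refine Finset.sum_le_sum fun F _ => ?_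
    refine le_trans (measure_B_le n p hp F (kf F.card)) ?_
    rw [← hpq, ← ENNReal.ofReal_pow ENNReal.toReal_nonneg,
      ← ENNReal.ofReal_natCast, ← ENNReal.ofReal_mul (by positivity)]
  -- step 3 : rewrite the sum
  have hstep3 : ∑ F ∈ 𝒜, ENNReal.ofReal (((F.card^2).choose (kf F.card) : ℝ) * q ^ (kf F.card))
      = ∑ j ∈ Finset.range (n+1), (n.choose j) •
          (if (j:ℝ) ≤ n * Λ / L then
            ENNReal.ofReal (((j^2).choose (kf j) : ℝ) * q ^ (kf j)) else 0) := by
    rw [h𝒜def, Finset.sum_filter]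
    rw [show (Finset.univ : Finset (Finset (Fin n))) = (Finset.univ : Finset (Fin n)).powerset by
      rw [Finset.powerset_univ]]
    rw [Finset.sum_powerset]
    rw [Finset.card_univ, Fintype.card_fin]
    refine Finset.sum_congr rfl fun j _ => ?_
    rw [Finset.sum_congr rfl (fun F hF => ?_), Finset.sum_const, Finset.card_powersetCard,
      Finset.card_univ, Fintype.card_fin]
    have : F.card = j := (Finset.mem_powersetCard.1 hF).2
    rw [this]
  -- step 4 : per-j bound
  set y : ENNReal := ENNReal.ofReal (Real.exp (-(200 * Λ))) with hydef
  have hstep4 : ∀ j ∈ Finset.range (n+1), (n.choose j) •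
          (if (j:ℝ) ≤ n * Λ / L then
            ENNReal.ofReal (((j^2).choose (kf j) : ℝ) * q ^ (kf j)) else 0)
      ≤ (if j = 0 then 0 else y ^ j) := by
    intro j _
    rcases Nat.eq_zero_or_pos j with rfl | hj
    · have hkf0 : kf 0 = 1 := by
        simp [hkfdef]
      rw [if_pos (by simp only [Nat.cast_zero]; positivity)]
      simp [hkf0]
    · rw [if_neg hj.ne']
      by_cases hjs : (j:ℝ) ≤ n * Λ / L
      · rw [if_pos hjs]
        have hmaster := master n j (kf j) (j^2) q hΛ hj hjs hq0 hq1 le_rfl (hkfreal j)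
        calc (n.choose j) • ENNReal.ofReal (((j^2).choose (kf j):ℝ) * q ^ kf j)
            = ENNReal.ofReal ((n.choose j : ℝ) * (((j^2).choose (kf j):ℝ) * q ^ kf j)) := by
              rw [nsmul_eq_mul, ← ENNReal.ofReal_natCast, ← ENNReal.ofReal_mul (by positivity)]
          _ ≤ ENNReal.ofReal (Real.exp (-(200 * j * Λ))) := ENNReal.ofReal_le_ofReal hmaster
          _ = y ^ j := by
              rw [hydef, ← ENNReal.ofReal_pow (Real.exp_nonneg _), ← Real.exp_nat_mul]
              congr 1
              congr 1
              ring
      · rw [if_neg hjs]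
        simp
  -- step 5 : geometric sum
  have hy : y ≤ 2⁻¹ := by
    rw [hydef, ENNReal.ofReal_le_iff_le_toReal (by simp)]
    have h1 : Real.exp (-(200 * Λ)) ≤ Real.exp (-1) := by
      apply Real.exp_le_exp.2
      nlinarith
    have hee : Real.exp (-1) * Real.exp 1 = 1 := by
      rw [← Real.exp_add]; norm_num
    have h2 : Real.exp (-1) ≤ 1/2 := by
      nlinarith [Real.exp_pos (-1), Real.add_one_le_exp 1]
    have h3 : ((2:ENNReal)⁻¹).toReal = 1/2 := by
      norm_num
    linarith
  have hgeom : ∑ j ∈ Finset.range (n+1), (if j = 0 then 0 else y ^ j)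
      ≤ 2 * y := by
    rw [Finset.sum_range_succ']
    norm_num
    have hys : ∑ i ∈ Finset.range n, y^(i+1) = y * ∑ i ∈ Finset.range n, y^i := by
      rw [Finset.mul_sum]
      refine Finset.sum_congr rfl fun i _ => ?_
      rw [pow_succ, mul_comm]
    rw [hys]
    calc y * ∑ i ∈ Finset.range n, y^i ≤ y * (1 - y)⁻¹ := by
          refine mul_le_mul_right ?_ y
          refine le_trans (ENNReal.sum_le_tsum _) ?_
          rw [ENNReal.tsum_geometric]
      _ ≤ y * 2 := by
          refine mul_le_mul_right ?_ y
          rw [show (2:ENNReal) = (2⁻¹:ENNReal)⁻¹ by rw [inv_inv]]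
          refine ENNReal.inv_le_inv.2 ?_
          refine ENNReal.le_sub_of_add_le_left (by rw [hydef]; exact ENNReal.ofReal_ne_top) ?_
          calc y + 2⁻¹ ≤ 2⁻¹ + 2⁻¹ := by gcongr
            _ = 1 := ENNReal.inv_two_add_inv_two
      _ = 2 * y := mul_comm y 2
  refine le_trans (measure_mono hcover) (le_trans hstep2 ?_)
  rw [hstep3]
  exact le_trans (Finset.sum_le_sum hstep4) hgeom

/-- P3. Let `p ≥ (ln n)/n` and `f(n) = np/ln n`. Then w.h.p.
`G ~ G(n,p)` is such that every `U` with `|U| ≤ n ln ln n / ln n` spans at most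
`100 |U| f(n) ln ln n` edges. -/
theorem gnp_edges_in_small_sets (p : ℕ → ENNReal) (hp : ∀ n, p n ≤ 1)
    (hlb : ∀ n : ℕ, ENNReal.ofReal (Real.log n / n) ≤ p n) :
    Tendsto
      (fun n => gnp n (p n) (hp n)
        {ω | ∀ U : Set (Fin n),
          (U.ncard : ℝ) ≤ n * Real.log (Real.log n) / Real.log n →
          (edgesIn (graphOf ω) U : ℝ) ≤
            100 * U.ncard * (n * (p n).toReal / Real.log n) * Real.log (Real.log n)})
      atTop (nhds 1) := by
  have hΛt : Tendsto (fun n : ℕ => Real.log (Real.log n)) atTop atTop :=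
    Real.tendsto_log_atTop.comp (Real.tendsto_log_atTop.comp tendsto_natCast_atTop_atTop)
  have hΛev : ∀ᶠ (n:ℕ) in atTop, 1 ≤ Real.log (Real.log n) := hΛt.eventually_ge_atTop 1
  have hbad : Tendsto (fun n => gnp n (p n) (hp n)
      {ω | ∀ U : Set (Fin n),
          (U.ncard : ℝ) ≤ n * Real.log (Real.log n) / Real.log n →
          (edgesIn (graphOf ω) U : ℝ) ≤
            100 * U.ncard * (n * (p n).toReal / Real.log n) * Real.log (Real.log n)}ᶜ)
      atTop (nhds 0) := by
    have hupper : Tendsto (fun n : ℕ =>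
        2 * ENNReal.ofReal (Real.exp (-(200 * Real.log (Real.log n))))) atTop (nhds 0) := by
      have h1 : Tendsto (fun n:ℕ => Real.exp (-(200 * Real.log (Real.log n)))) atTop (nhds 0) := by
        refine Real.tendsto_exp_atBot.comp ?_
        refine tendsto_neg_atTop_atBot.comp ?_
        exact hΛt.const_mul_atTop (by norm_num)
      have h2 := ENNReal.tendsto_ofReal (f := atTop) h1
      have h3 := ENNReal.Tendsto.const_mul h2 (Or.inr (by norm_num : (2:ENNReal) ≠ ⊤))
      simpa using h3
    refine tendsto_of_tendsto_of_tendsto_of_le_of_le' tendsto_const_nhds hupper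
      (Eventually.of_forall fun n => zero_le)
      (hΛev.mono fun n hn => bad_bound n (p n) (hp n) (hlb n) hn)
  have hgood : ∀ n : ℕ, gnp n (p n) (hp n)
      {ω | ∀ U : Set (Fin n),
          (U.ncard : ℝ) ≤ n * Real.log (Real.log n) / Real.log n →
          (edgesIn (graphOf ω) U : ℝ) ≤
            100 * U.ncard * (n * (p n).toReal / Real.log n) * Real.log (Real.log n)}
    = 1 - gnp n (p n) (hp n)
      {ω | ∀ U : Set (Fin n),
          (U.ncard : ℝ) ≤ n * Real.log (Real.log n) / Real.log n →
          (edgesIn (graphOf ω) U : ℝ) ≤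
            100 * U.ncard * (n * (p n).toReal / Real.log n) * Real.log (Real.log n)}ᶜ := by
    intro n
    conv_lhs => rw [← compl_compl {ω : Sym2 (Fin n) → Bool | ∀ U : Set (Fin n),
          (U.ncard : ℝ) ≤ n * Real.log (Real.log n) / Real.log n →
          (edgesIn (graphOf ω) U : ℝ) ≤
            100 * U.ncard * (n * (p n).toReal / Real.log n) * Real.log (Real.log n)}]
    exact prob_compl_eq_one_sub (gnp_meas _)
  rw [funext hgood]
  have := ENNReal.Tendsto.sub (tendsto_const_nhds (x := (1:ENNReal)) (f := atTop)) hbad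
    (Or.inl ENNReal.one_ne_top)
  simpa using this
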